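/- The three quaternions 1 + 2i, 1 + 2j and 1 + 2k freely generate a free subgroup of rank 3 of the group of units of ℍ(ℚ): the homomorphism from the free group on three generators to the units of ℍ(ℚ) sending the generators to 1 + 2i, 1 + 2j and 1 + 2k is injective. -/

import Mathlib

namespace Free13

open Quaternion

def g (R : Type) [CommRing R] : Fin 3 → Quaternion R :=
  ![⟨1,2,0,0⟩, ⟨1,0,2,0⟩, ⟨1,0,0,2⟩]

def letter (R : Type) [CommRing R] (x : Fin 3 × Bool) : Quaternion R :=
  if x.2 then g R x.1 else star (g R x.1)

def W (R : Type) [CommRing R] : List (Fin 3 × Bool) → Quaternion R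
  | [] => 1
  | x :: L => letter R x * W R L

@[simp] lemma W_nil (R : Type) [CommRing R] : W R [] = 1 := rfl
@[simp] lemma W_cons (R : Type) [CommRing R] (x) (L) :
    W R (x :: L) = letter R x * W R L := rfl

def qmap {R S : Type} [CommRing R] [CommRing S] (f : R →+* S) :
    Quaternion R →+* Quaternion S where
  toFun q := ⟨f q.re, f q.imI, f q.imJ, f q.imK⟩
  map_one' := by ext <;> simp
  map_zero' := by ext <;> simp
  map_add' p q := by ext <;> simp <;> rfl
  map_mul' p q := by
    ext <;>
      simp [Quaternion.re_mul, Quaternion.imI_mul, Quaternion.imJ_mul, Quaternion.imK_mul]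
    · erw [Quaternion.re_mul]
    · erw [Quaternion.imI_mul]
    · erw [Quaternion.imJ_mul]
    · erw [Quaternion.imK_mul]

@[simp] lemma qmap_re {R S : Type} [CommRing R] [CommRing S] (f : R →+* S) (q) :
    (qmap f q).re = f q.re := rfl
@[simp] lemma qmap_imI {R S : Type} [CommRing R] [CommRing S] (f : R →+* S) (q) :
    (qmap f q).imI = f q.imI := rfl
@[simp] lemma qmap_imJ {R S : Type} [CommRing R] [CommRing S] (f : R →+* S) (q) :
    (qmap f q).imJ = f q.imJ := rfl
@[simp] lemma qmap_imK {R S : Type} [CommRing R] [CommRing S] (f : R →+* S) (q) :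
    (qmap f q).imK = f q.imK := rfl

@[simp] lemma qmap_mk {R S : Type} [CommRing R] [CommRing S] (f : R →+* S) (a b c d : R) :
    qmap f (⟨a, b, c, d⟩ : Quaternion R) = ⟨f a, f b, f c, f d⟩ := rfl

@[simp] lemma star_mk' {R : Type} [CommRing R] (a b c d : R) :
    star (⟨a, b, c, d⟩ : Quaternion R) = ⟨a, -b, -c, -d⟩ := by
  apply Quaternion.ext
  · erw [Quaternion.re_star]
  · erw [Quaternion.imI_star]
  · erw [Quaternion.imJ_star]
  · erw [Quaternion.imK_star]

lemma l0t (R : Type) [CommRing R] : letter R (0, true) = ⟨1, 2, 0, 0⟩ := rfl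
lemma l1t (R : Type) [CommRing R] : letter R (1, true) = ⟨1, 0, 2, 0⟩ := rfl
lemma l2t (R : Type) [CommRing R] : letter R (2, true) = ⟨1, 0, 0, 2⟩ := rfl
lemma l0f (R : Type) [CommRing R] : letter R (0, false) = ⟨1, -2, -0, -0⟩ := star_mk' _ _ _ _
lemma l1f (R : Type) [CommRing R] : letter R (1, false) = ⟨1, -0, -2, -0⟩ := star_mk' _ _ _ _
lemma l2f (R : Type) [CommRing R] : letter R (2, false) = ⟨1, -0, -0, -2⟩ := star_mk' _ _ _ _

@[simp] lemma normSq_mk {R : Type} [CommRing R] (a b c d : R) :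
    normSq (⟨a, b, c, d⟩ : Quaternion R) = a ^ 2 + b ^ 2 + c ^ 2 + d ^ 2 := by
  erw [Quaternion.normSq_def']

lemma qmap_coe {R S : Type} [CommRing R] [CommRing S] (f : R →+* S) (r : R) :
    qmap f ((r : Quaternion R)) = ((f r : S) : Quaternion S) := by
  ext <;> simp

lemma qmap_injective {R S : Type} [CommRing R] [CommRing S] {f : R →+* S}
    (hf : Function.Injective f) : Function.Injective (qmap f) := by
  intro p q h
  rw [Quaternion.ext_iff] at h ⊢
  exact ⟨hf h.1, hf h.2.1, hf h.2.2.1, hf h.2.2.2⟩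

lemma qmap_letter {R S : Type} [CommRing R] [CommRing S] (f : R →+* S) (x) :
    qmap f (letter R x) = letter S x := by
  obtain ⟨a, b⟩ := x
  fin_cases a <;> cases b <;>
    · ext <;> simp [l0t, l1t, l2t, l0f, l1f, l2f, Quaternion.ext_iff, map_ofNat]

lemma qmap_W {R S : Type} [CommRing R] [CommRing S] (f : R →+* S) (L) :
    qmap f (W R L) = W S L := by
  induction L with
  | nil => simp
  | cons x L ih => simp [map_mul, qmap_letter, ih]

lemma normSq_letter (R : Type) [CommRing R] (x) : normSq (letter R x) = 5 := by
  obtain ⟨a, b⟩ := x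
  fin_cases a <;> cases b <;>
    · simp [l0t, l1t, l2t, l0f, l1f, l2f, Quaternion.normSq_def']
      norm_num

lemma normSq_W (R : Type) [CommRing R] (L) : normSq (W R L) = 5 ^ L.length := by
  induction L with
  | nil => simp
  | cons x L ih => simp [map_mul, normSq_letter, ih, pow_succ]; ring

abbrev Z5 := ZMod 5

lemma letter_ne_zero (x : Fin 3 × Bool) : letter Z5 x ≠ 0 := by
  intro hx
  have := congrArg QuaternionAlgebra.re hx
  obtain ⟨a, b⟩ := x
  fin_cases a <;> cases b <;>
    · simp [letter, g] at this
      exact absurd this (by decide)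

lemma re_unit (x y : Fin 3 × Bool) (h : ¬(x.1 = y.1 ∧ y.2 = !x.2)) :
    ∃ s : Z5, s * (2 * (letter Z5 x * letter Z5 y).re) = 1 := by
  revert h
  revert x y
  decide

lemma key (x y : Fin 3 × Bool) (h : ¬(x.1 = y.1 ∧ y.2 = !x.2)) (z : Quaternion Z5)
    (h0 : letter Z5 x * (letter Z5 y * z) = 0) : letter Z5 y * z = 0 := by
  set a := letter Z5 x with ha
  set b := letter Z5 y with hb
  have h5 : ((5 : Z5) : Quaternion Z5) = 0 := by
    have : (5 : Z5) = 0 := by decide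
    rw [this, Quaternion.coe_zero]
  have hbsb : b * star b = 0 := by
    rw [Quaternion.self_mul_star, normSq_letter, h5]
  have hstar : b * star (a * b) = 0 := by
    rw [StarMul.star_mul, ← mul_assoc, hbsb, zero_mul]
  have habz : a * b * z = 0 := by rw [mul_assoc]; exact h0
  set t : Z5 := 2 * (a * b).re with ht
  have hts : a * b + star (a * b) = ((t : Z5) : Quaternion Z5) :=
    Quaternion.self_add_star' (a * b)
  have hmain : ((t : Z5) : Quaternion Z5) * (b * z) = 0 := by
    calc ((t : Z5) : Quaternion Z5) * (b * z)
        = b * ((t : Z5) : Quaternion Z5) * z := by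
          rw [Quaternion.mul_coe_eq_smul, Quaternion.coe_mul_eq_smul, smul_mul_assoc]
      _ = b * (a * b + star (a * b)) * z := by rw [hts]
      _ = b * (a * b * z) + (b * star (a * b)) * z := by noncomm_ring
      _ = 0 := by rw [habz, hstar, mul_zero, zero_mul, add_zero]
  obtain ⟨s, hs⟩ : ∃ s : Z5, s * t = 1 := re_unit x y h
  have h2 : ((s : Z5) : Quaternion Z5) * (↑t * (b * z)) = 0 := by
    rw [hmain, mul_zero]
  rwa [← mul_assoc, ← Quaternion.coe_mul, hs, Quaternion.coe_one, one_mul] at h2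

lemma main : ∀ (L : List (Fin 3 × Bool)),
    (∀ L2 (x : Fin 3) (b : Bool) L3, L ≠ L2 ++ (x, b) :: (x, !b) :: L3) →
    W Z5 L ≠ 0
  | [], _ => by
    intro h
    have : (1 : Z5) = 0 := by simpa using congrArg QuaternionAlgebra.re h
    exact absurd this (by decide)
  | [x], _ => by simpa using letter_ne_zero x
  | x :: y :: L, h => by
    intro h0
    have hyL : W Z5 (y :: L) ≠ 0 :=
      main (y :: L) (fun L2 a b L3 hEq => h (x :: L2) a b L3 (by rw [hEq]; rfl))
    have hxy : ¬(x.1 = y.1 ∧ y.2 = !x.2) := by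
      rintro ⟨h1, h2⟩
      have hy : y = (x.1, !x.2) := by rw [Prod.ext_iff]; exact ⟨h1.symm, h2⟩
      exact h [] x.1 x.2 L (by rw [List.nil_append, ← hy])
    have := key x y hxy (W Z5 L) (by simpa [W, mul_assoc] using h0)
    exact hyL (by simpa [W] using this)


lemma letter_true (R : Type) [CommRing R] (a : Fin 3) : letter R (a, true) = g R a := rfl
lemma letter_false (R : Type) [CommRing R] (a : Fin 3) :
    letter R (a, false) = star (g R a) := rfl

lemma W_eq_prod (F : Fin 3 → (Quaternion ℚ)ˣ)
    (hF : ∀ a : Fin 3, ((F a : Quaternion ℚ)) = g ℚ a) :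
    ∀ L : List (Fin 3 × Bool),
      W ℚ L = ((5 : ℚ) ^ (L.countP fun x => !x.2)) •
        (L.map fun x =>
          ((cond x.2 (F x.1) (F x.1)⁻¹ : (Quaternion ℚ)ˣ) : Quaternion ℚ)).prod := by
  have hFinv : ∀ a : Fin 3, (((F a)⁻¹ : (Quaternion ℚ)ˣ) : Quaternion ℚ)
      = (5 : ℚ)⁻¹ • star (g ℚ a) := by
    intro a
    rw [Units.val_inv_eq_inv_val, hF, Quaternion.inv_def]
    congr 1
    have : normSq (g ℚ a) = 5 := by
      rw [← letter_true ℚ a]; exact normSq_letter ℚ (a, true)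
    rw [this]
  intro L
  induction L with
  | nil => simp
  | cons x L ih =>
    obtain ⟨a, b⟩ := x
    cases b
    · have hc : List.countP (fun x => !x.2) ((a, false) :: L)
          = List.countP (fun x => !x.2) L + 1 := by simp
      rw [W_cons, letter_false, ih, List.map_cons, List.prod_cons, hc, Bool.cond_false,
        hFinv, smul_mul_assoc, smul_smul, mul_smul_comm, pow_succ]
      congr 1
      field_simp
    · have hc : List.countP (fun x => !x.2) ((a, true) :: L)
          = List.countP (fun x => !x.2) L := by simp
      rw [W_cons, letter_true, ih, List.map_cons, List.prod_cons, hc, Bool.cond_true, hF,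
        mul_smul_comm]

end Free13


/-- The quaternions `1 + 2i`, `1 + 2j` and `1 + 2k` freely
generate a free subgroup of rank 3 of the units of `ℍ(ℚ)`. -/
theorem one_add_two_i_j_k_free :
    Function.Injective
      (FreeGroup.lift
        (![Units.mk0 (⟨1, 2, 0, 0⟩ : Quaternion ℚ)
            (fun h => one_ne_zero (α := ℚ) (congrArg QuaternionAlgebra.re h)),
           Units.mk0 (⟨1, 0, 2, 0⟩ : Quaternion ℚ)
            (fun h => one_ne_zero (α := ℚ) (congrArg QuaternionAlgebra.re h)),
           Units.mk0 (⟨1, 0, 0, 2⟩ : Quaternion ℚ)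
            (fun h => one_ne_zero (α := ℚ) (congrArg QuaternionAlgebra.re h))] :
          Fin 3 → (Quaternion ℚ)ˣ)) := by
  open Free13 Quaternion in
  set F : Fin 3 → (Quaternion ℚ)ˣ :=
    ![Units.mk0 (⟨1, 2, 0, 0⟩ : Quaternion ℚ) (fun h => one_ne_zero (α := ℚ) (congrArg QuaternionAlgebra.re h)),
      Units.mk0 (⟨1, 0, 2, 0⟩ : Quaternion ℚ) (fun h => one_ne_zero (α := ℚ) (congrArg QuaternionAlgebra.re h)),
      Units.mk0 (⟨1, 0, 0, 2⟩ : Quaternion ℚ) (fun h => one_ne_zero (α := ℚ) (congrArg QuaternionAlgebra.re h))] with hFdef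
  have hF : ∀ a : Fin 3, ((F a : Quaternion ℚ)) = g ℚ a := by
    intro a
    fin_cases a <;> simp [hFdef, g] <;> rfl
  rw [injective_iff_map_eq_one]
  intro w hw
  set L : List (Fin 3 × Bool) := w.toWord with hL
  set m : ℕ := L.countP fun x => !x.2 with hm
  -- reducedness
  have hred : ∀ L2 (x : Fin 3) (b : Bool) L3, L ≠ L2 ++ (x, b) :: (x, !b) :: L3 := by
    intro L2 x b L3 hEq
    exact FreeGroup.reduce.not (α := Fin 3) (p := False)
      (by rw [FreeGroup.reduce_toWord]; exact hEq)
  -- value of the lifted word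
  have hw' : (L.map fun x =>
      ((cond x.2 (F x.1) (F x.1)⁻¹ : (Quaternion ℚ)ˣ) : Quaternion ℚ)).prod = 1 := by
    have h1 : FreeGroup.lift F (FreeGroup.mk L) = 1 := by
      rw [hL, FreeGroup.mk_toWord]; exact hw
    rw [FreeGroup.lift_mk] at h1
    have h2 := congrArg (Units.coeHom (Quaternion ℚ)) h1
    rw [map_list_prod] at h2
    simpa [List.map_map, Function.comp_def] using h2
  have hWQ : W ℚ L = (⟨(5 : ℚ) ^ m, 0, 0, 0⟩ : Quaternion ℚ) := by
    rw [W_eq_prod F hF L, hw']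
    ext <;>
      simp only [hm, Quaternion.re_smul, Quaternion.imI_smul, Quaternion.imJ_smul,
        Quaternion.imK_smul, Quaternion.re_one, Quaternion.imI_one, Quaternion.imJ_one,
        Quaternion.imK_one, smul_eq_mul, mul_one, mul_zero, smul_zero]
  -- descend to ℤ
  have hWZ : W ℤ L = (⟨(5 : ℤ) ^ m, 0, 0, 0⟩ : Quaternion ℤ) := by
    apply qmap_injective (f := Int.castRingHom ℚ) Int.cast_injective
    rw [qmap_W, hWQ]
    ext <;> simp
  -- push to ZMod 5
  have hW5 : W Free13.Z5 L = (⟨(5 : Free13.Z5) ^ m, 0, 0, 0⟩ : Quaternion Free13.Z5) := by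
    have := congrArg (qmap (Int.castRingHom Free13.Z5)) hWZ
    rw [qmap_W] at this
    rw [this]
    ext <;> simp
  have h50 : (5 : Free13.Z5) = 0 := by decide
  have hm0 : m = 0 := by
    by_contra hm0
    apply main L hred
    rw [hW5]
    ext <;> simp [h50, zero_pow hm0]
  -- m = 0 : the word is a product of positive letters, norm forces it to be empty
  have hW1 : W ℤ L = 1 := by
    rw [hWZ, hm0]
    ext <;> simp
  have hlen : (5 : ℤ) ^ L.length = 1 := by
    rw [← normSq_W ℤ L, hW1, map_one]
  have hL0 : L.length = 0 := by
    by_contra hn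
    have h1 : (5 : ℤ) ^ L.length ≥ 5 ^ 1 := by
      apply pow_le_pow_right₀ (by norm_num)
      omega
    simp at h1
    omega
  have : w.toWord = [] := List.length_eq_zero_iff.mp hL0
  exact FreeGroup.toWord_eq_nil_iff.mp this
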